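/- Let K ⊆ ℝ^d be a convex body containing the origin in its interior and let λ > 0. Then K is λ-strongly convex with respect to itself (i.e., for every x, y ∈ K, (x+y)/2 + λ·‖x−y‖_K²·K ⊆ K) if and only if its gauge ‖·‖_K is (2,λ)-convex (i.e., for all x, y with ‖x‖_K ≤ 1 and ‖y‖_K ≤ 1, one has ‖(x+y)/2‖_K ≤ 1 − λ·‖x−y‖_K²). -/

import Mathlib

open Pointwise

open Topology Filter

/-- A convex body `K` with `0` in its interior is `λ`-strongly convex with
respect to itself iff its gauge `‖·‖_K` is `(2,λ)`-convex. -/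
theorem strongly_convex_body_iff_two_convex_gauge
    {d : ℕ} (K : Set (EuclideanSpace ℝ (Fin d))) (lam : ℝ)
    (hKcomp : IsCompact K) (hKconv : Convex ℝ K)
    (h0 : (0 : EuclideanSpace ℝ (Fin d)) ∈ interior K) (hlam : 0 < lam) :
    (∀ x ∈ K, ∀ y ∈ K,
      ({midpoint ℝ x y} : Set (EuclideanSpace ℝ (Fin d)))
        + (lam * gauge K (x - y) ^ 2) • K ⊆ K)
    ↔
    (∀ x y : EuclideanSpace ℝ (Fin d), gauge K x ≤ 1 → gauge K y ≤ 1 →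
      gauge K (midpoint ℝ x y) ≤ 1 - lam * gauge K (x - y) ^ 2) := by
  have hKcl : IsClosed K := hKcomp.isClosed
  have h0K : (0 : EuclideanSpace ℝ (Fin d)) ∈ K := interior_subset h0
  have hnhds : K ∈ 𝓝 (0 : EuclideanSpace ℝ (Fin d)) := mem_interior_iff_mem_nhds.mp h0
  have habs : Absorbent ℝ K := absorbent_nhds_zero hnhds
  have hmem_iff : ∀ z, gauge K z ≤ 1 ↔ z ∈ K := by
    intro z
    rw [gauge_le_one_iff_mem_closure hKconv hnhds, hKcl.closure_eq]
  obtain ⟨R, hR⟩ := isBounded_iff_forall_norm_le.mp hKcomp.isBounded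
  constructor
  · intro H x y hx hy
    set t := lam * gauge K (x - y) ^ 2 with htdef
    set m := midpoint ℝ x y with hmdef
    have hxK := (hmem_iff x).mp hx
    have hyK := (hmem_iff y).mp hy
    have hmK : m ∈ K := hKconv.segment_subset hxK hyK (midpoint_mem_segment x y)
    have ht0 : 0 ≤ t := mul_nonneg hlam.le (sq_nonneg _)
    have hsub : ∀ k ∈ K, m + t • k ∈ K := fun k hk =>
      H x hxK y hyK (Set.add_mem_add (Set.mem_singleton _) (Set.smul_mem_smul_set hk))
    rcases eq_or_lt_of_le ht0 with ht | ht
    · rw [← ht, sub_zero]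
      exact gauge_le_one_of_mem hmK
    -- iterate the containment
    have key : ∀ n : ℕ, ∀ k ∈ K,
        (∑ i ∈ Finset.range n, t ^ i) • m + t ^ n • k ∈ K := by
      intro n
      induction n with
      | zero => intro k hk; simpa using hk
      | succ n ih =>
        intro k hk
        have h1 := hsub _ (ih k hk)
        have heq : m + t • ((∑ i ∈ Finset.range n, t ^ i) • m + t ^ n • k)
            = (∑ i ∈ Finset.range (n + 1), t ^ i) • m + t ^ (n + 1) • k := by
          rw [geom_sum_succ]
          module
        rwa [heq] at h1
    -- t ≤ 1
    have ht1 : t ≤ 1 := by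
      by_contra h
      push_neg at h
      have hv : x - y ≠ 0 := by
        intro hv0
        rw [hv0, gauge_zero] at htdef
        simp [htdef] at ht
      obtain ⟨r, hr, hball⟩ := Metric.mem_nhds_iff.mp hnhds
      set p : EuclideanSpace ℝ (Fin d) := (r / 2 * ‖x - y‖⁻¹) • (x - y) with hpdef
      have hnv : 0 < ‖x - y‖ := norm_pos_iff.mpr hv
      have hpnorm : ‖p‖ = r / 2 := by
        rw [hpdef, norm_smul, Real.norm_eq_abs, abs_of_nonneg
          (by positivity), mul_assoc, inv_mul_cancel₀ hnv.ne', mul_one]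
      have hpK : p ∈ K := hball (by simp [Metric.mem_ball, hpnorm]; linarith)
      have hpK' : -p ∈ K := hball (by simp [Metric.mem_ball, hpnorm]; linarith)
      obtain ⟨n, hn⟩ := pow_unbounded_of_one_lt (2 * R / r) h
      have ha := key n p hpK
      have hb := key n (-p) hpK'
      have hdist : ‖((∑ i ∈ Finset.range n, t ^ i) • m + t ^ n • p)
          - ((∑ i ∈ Finset.range n, t ^ i) • m + t ^ n • (-p))‖ = t ^ n * r := by
        have : ((∑ i ∈ Finset.range n, t ^ i) • m + t ^ n • p)
            - ((∑ i ∈ Finset.range n, t ^ i) • m + t ^ n • (-p)) = (2 * t ^ n) • p := by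
          module
        rw [this, norm_smul, Real.norm_eq_abs, abs_of_nonneg (by positivity), hpnorm]
        ring
      have hle : t ^ n * r ≤ 2 * R := by
        rw [← hdist]
        calc _ ≤ ‖(∑ i ∈ Finset.range n, t ^ i) • m + t ^ n • p‖
              + ‖(∑ i ∈ Finset.range n, t ^ i) • m + t ^ n • (-p)‖ := norm_sub_le _ _
          _ ≤ R + R := add_le_add (hR _ ha) (hR _ hb)
          _ = 2 * R := by ring
      have : t ^ n ≤ 2 * R / r := (le_div_iff₀ hr).mpr hle
      linarith
    rcases eq_or_lt_of_le ht1 with ht1' | ht1'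
    · -- t = 1 : m = 0
      have hm0 : m = 0 := by
        by_contra hm
        have hmn : 0 < ‖m‖ := norm_pos_iff.mpr hm
        obtain ⟨n, hn⟩ := exists_nat_gt (R / ‖m‖)
        have := key n 0 h0K
        rw [smul_zero, add_zero] at this
        have hs : (∑ i ∈ Finset.range n, t ^ i) = (n : ℝ) := by
          simp [ht1']
        rw [hs] at this
        have := hR _ this
        rw [norm_smul, Real.norm_natCast] at this
        have : (n : ℝ) ≤ R / ‖m‖ := by
          rw [le_div_iff₀ hmn]; exact this
        linarith
      rw [hm0, gauge_zero, ← ht1']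
      norm_num
    · -- t < 1 : limit argument
      have hlim : Filter.Tendsto (fun n => (∑ i ∈ Finset.range n, t ^ i) • m)
          Filter.atTop (𝓝 ((1 - t)⁻¹ • m)) :=
        ((hasSum_geometric_of_lt_one ht0 ht1').tendsto_sum_nat).smul_const m
      have hmemlim : (1 - t)⁻¹ • m ∈ K := by
        refine hKcl.mem_of_tendsto hlim (Filter.Eventually.of_forall fun n => ?_)
        have := key n 0 h0K
        rwa [smul_zero, add_zero] at this
      have h1t : 0 < 1 - t := by linarith
      have : gauge K ((1 - t) • ((1 - t)⁻¹ • m)) ≤ (1 - t) * 1 := by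
        rw [gauge_smul_of_nonneg h1t.le, smul_eq_mul]
        exact mul_le_mul_of_nonneg_left (gauge_le_one_of_mem hmemlim) h1t.le
      rwa [smul_inv_smul₀ h1t.ne', mul_one] at this
  · intro H x hxK y hyK z hz
    obtain ⟨a, ha, b, hb, rfl⟩ := hz
    rw [Set.mem_singleton_iff] at ha
    subst ha
    obtain ⟨k, hk, rfl⟩ := hb
    set t := lam * gauge K (x - y) ^ 2 with htdef
    have ht0 : 0 ≤ t := mul_nonneg hlam.le (sq_nonneg _)
    apply (hmem_iff _).mp
    calc gauge K (midpoint ℝ x y + t • k)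
        ≤ gauge K (midpoint ℝ x y) + gauge K (t • k) := gauge_add_le hKconv habs _ _
      _ ≤ (1 - t) + t * gauge K k := by
          rw [gauge_smul_of_nonneg ht0, smul_eq_mul]
          exact add_le_add_left (H x y (gauge_le_one_of_mem hxK) (gauge_le_one_of_mem hyK)) _
      _ ≤ (1 - t) + t * 1 := by
          exact add_le_add_right (mul_le_mul_of_nonneg_left (gauge_le_one_of_mem hk) ht0) _
      _ = 1 := by ring
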